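/- With the setup of the previous Hermitian Lie algebra (β = 0, J integrable, so [A, J|_{k₁}] = 0 and η of type (1,1)), the structure is SKT (i.e., d(Jdω) = 0, where (Jσ)(X,Y,Z) := -σ(JX,JY,JZ) for a 3-form σ) if and only if η∧η = η ∧ A*ω and (aA + A² + AᵗA)*ω = 2a·η on k₁. In particular, it is Kähler (dω = 0) if and only if η = A*ω. -/
import Mathlib


open scoped RealInnerProductSpace

/-- `psi A Jk η U V = η U V - ((A*ω) restricted)(U,V)`. -/
noncomputable def psi {k : Type*} [NormedAddCommGroup k] [InnerProductSpace ℝ k]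
    (A Jk : k →ₗ[ℝ] k) (η : k →ₗ[ℝ] k →ₗ[ℝ] ℝ) (U V : k) : ℝ :=
  η U V - (⟪Jk (A U), V⟫ + ⟪Jk U, A V⟫)

/-- SKT characterization: the Hermitian almost nilpotent Lie algebra
`(μ(a,0,A,η), J, g)` is SKT iff `η∧η = η ∧ A*ω` and `(aA + A² + AᵗA)*ω = 2aη`;
it is Kähler iff `η = A*ω`. -/
theorem stmt_3 {k : Type*} [NormedAddCommGroup k] [InnerProductSpace ℝ k]
    [FiniteDimensional ℝ k]
    (a : ℝ) (A : k →ₗ[ℝ] k) (η : k →ₗ[ℝ] k →ₗ[ℝ] ℝ) (Jk : k →ₗ[ℝ] k)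
    (hη_alt : ∀ X Y : k, η X Y = - η Y X) (hη_ne : η ≠ 0)
    (hJk2 : ∀ X, Jk (Jk X) = -X)
    (hJkorth : ∀ X Y : k, ⟪Jk X, Jk Y⟫ = ⟪X, Y⟫)
    (hcomm : ∀ X : k, A (Jk X) = Jk (A X))
    (h11 : ∀ X Y : k, η (Jk X) (Jk Y) = η X Y)
    (hder : ∀ X Y : k, η (A X) Y + η X (A Y) = a * η X Y)
    (br : (ℝ × k × ℝ) → (ℝ × k × ℝ) → (ℝ × k × ℝ))
    (hbr : ∀ P Q : ℝ × k × ℝ, br P Q =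
      (P.2.2 * (a * Q.1) - Q.2.2 * (a * P.1) - η P.2.1 Q.2.1,
       P.2.2 • A Q.2.1 - Q.2.2 • A P.2.1, 0))
    (J : (ℝ × k × ℝ) → (ℝ × k × ℝ))
    (hJ : ∀ P : ℝ × k × ℝ, J P = (-P.2.2, Jk P.2.1, P.1))
    (g ω : (ℝ × k × ℝ) → (ℝ × k × ℝ) → ℝ)
    (hg : ∀ P Q : ℝ × k × ℝ, g P Q = P.1 * Q.1 + ⟪P.2.1, Q.2.1⟫ + P.2.2 * Q.2.2)
    (hω : ∀ P Q, ω P Q = g (J P) Q)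
    (dω : (ℝ × k × ℝ) → (ℝ × k × ℝ) → (ℝ × k × ℝ) → ℝ)
    (hdω : ∀ P Q R, dω P Q R = -(ω (br P Q) R) - ω (br R P) Q - ω (br Q R) P)
    (σ : (ℝ × k × ℝ) → (ℝ × k × ℝ) → (ℝ × k × ℝ) → ℝ)
    (hσ : ∀ P Q R, σ P Q R = -(dω (J P) (J Q) (J R))) :
    ((∀ P Q R S : ℝ × k × ℝ,
        -(σ (br P Q) R S) + σ (br P R) Q S - σ (br P S) Q R
          - σ (br Q R) P S + σ (br Q S) P R - σ (br R S) P Q = 0) ↔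
      ((∀ X Y Z W : k,
          η X Y * η Z W - η X Z * η Y W + η X W * η Y Z
            + η Y Z * η X W - η Y W * η X Z + η Z W * η X Y
          = η X Y * (⟪Jk (A Z), W⟫ + ⟪Jk Z, A W⟫)
            - η X Z * (⟪Jk (A Y), W⟫ + ⟪Jk Y, A W⟫)
            + η X W * (⟪Jk (A Y), Z⟫ + ⟪Jk Y, A Z⟫)
            + η Y Z * (⟪Jk (A X), W⟫ + ⟪Jk X, A W⟫)
            - η Y W * (⟪Jk (A X), Z⟫ + ⟪Jk X, A Z⟫)
            + η Z W * (⟪Jk (A X), Y⟫ + ⟪Jk X, A Y⟫)) ∧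
        (∀ X Y : k,
          ⟪Jk ((a • A + A ∘ₗ A + (LinearMap.adjoint A) ∘ₗ A) X), Y⟫
            + ⟪Jk X, (a • A + A ∘ₗ A + (LinearMap.adjoint A) ∘ₗ A) Y⟫
          = 2 * a * η X Y)))
    ∧ ((∀ P Q R, dω P Q R = 0) ↔
        (∀ X Y : k, η X Y = ⟪Jk (A X), Y⟫ + ⟪Jk X, A Y⟫)) := by
  -- `Jk` is skew-adjoint
  have hJsk : ∀ U V : k, ⟪Jk U, V⟫ = -⟪U, Jk V⟫ := by
    intro U V
    have h := hJkorth U (Jk V)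
    rw [hJk2, inner_neg_right] at h
    linarith
  -- orientation lemma for mixed inner products
  have hJAA : ∀ U V : k, ⟪Jk U, A V⟫ = -⟪Jk (A V), U⟫ := by
    intro U V
    rw [hJsk U (A V), real_inner_comm]
  -- adjoint facts
  have hadjJ : ∀ W V : k, ⟪Jk (LinearMap.adjoint A W), V⟫ = ⟪Jk W, A V⟫ := by
    intro W V
    have h1 := hJsk (LinearMap.adjoint A W) V
    have h2 := LinearMap.adjoint_inner_left A (Jk V) W
    have h3 := hJsk W (A V)
    rw [hcomm] at h2
    linarith
  have hadj2 : ∀ U V : k, ⟪Jk U, LinearMap.adjoint A (A V)⟫ = ⟪Jk (A U), A V⟫ := by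
    intro U V
    have h1 := real_inner_comm (LinearMap.adjoint A (A V)) (Jk U)
    have h2 := LinearMap.adjoint_inner_left A (Jk U) (A V)
    rw [hcomm] at h2
    have h3 := real_inner_comm (A V) (Jk (A U))
    linarith
  -- skewness of psi
  have hψ_skew : ∀ U V : k, psi A Jk η U V = -psi A Jk η V U := by
    intro U V
    simp only [psi]
    linear_combination hη_alt U V - hJsk (A U) V - real_inner_comm (A U) (Jk V)
      - hJsk (A V) U - real_inner_comm (A V) (Jk U)
  have hψA : ∀ U V : k, psi A Jk η V (A U) = -psi A Jk η (A U) V :=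
    fun U V => hψ_skew V (A U)
  -- bilinearity of psi
  have hψ_left : ∀ (c d : ℝ) (V W U : k),
      psi A Jk η (c • V - d • W) U = c * psi A Jk η V U - d * psi A Jk η W U := by
    intro c d V W U
    simp only [psi, map_sub, map_smul, LinearMap.sub_apply, LinearMap.smul_apply,
      inner_sub_left, real_inner_smul_left, smul_eq_mul]
    ring
  have hψ_right : ∀ (U : k) (c d : ℝ) (V W : k),
      psi A Jk η U (c • V - d • W) = c * psi A Jk η U V - d * psi A Jk η U W := by
    intro U c d V W
    simp only [psi, map_sub, map_smul, LinearMap.sub_apply, LinearMap.smul_apply,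
      inner_sub_right, real_inner_smul_right, smul_eq_mul]
    ring
  have hψz1 : ∀ V : k, psi A Jk η 0 V = 0 := by
    intro V; simp [psi]
  -- psi is (1,1)
  have hψJ : ∀ U V : k, psi A Jk η (Jk U) (Jk V) = psi A Jk η U V := by
    intro U V
    simp only [psi]
    rw [hcomm U, hcomm V, hJkorth (Jk (A U)) V, hJkorth (Jk U) (A V), h11]
  -- formula for dω
  have hdω' : ∀ P Q R : ℝ × k × ℝ, dω P Q R =
      P.2.2 * psi A Jk η Q.2.1 R.2.1 + Q.2.2 * psi A Jk η R.2.1 P.2.1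
        + R.2.2 * psi A Jk η P.2.1 Q.2.1 := by
    intro P Q R
    simp only [hdω, hω, hJ, hbr, hg, psi]
    simp only [map_sub, map_smul, inner_sub_left, real_inner_smul_left, neg_zero,
      zero_mul, mul_zero, zero_add, add_zero, smul_eq_mul]
    simp only [hJAA]
    ring
  -- formula for σ
  have hσ' : ∀ P Q R : ℝ × k × ℝ, σ P Q R =
      -(P.1 * psi A Jk η Q.2.1 R.2.1 + Q.1 * psi A Jk η R.2.1 P.2.1
        + R.1 * psi A Jk η P.2.1 Q.2.1) := by
    intro P Q R
    rw [hσ, hJ P, hJ Q, hJ R, hdω']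
    dsimp only
    rw [hψJ, hψJ, hψJ]
  -- master formula for the 4-form dd^c ω
  have master : ∀ P Q R S : ℝ × k × ℝ,
      -(σ (br P Q) R S) + σ (br P R) Q S - σ (br P S) Q R
          - σ (br Q R) P S + σ (br Q S) P R - σ (br R S) P Q =
      -(η P.2.1 Q.2.1 * psi A Jk η R.2.1 S.2.1 - η P.2.1 R.2.1 * psi A Jk η Q.2.1 S.2.1
          + η P.2.1 S.2.1 * psi A Jk η Q.2.1 R.2.1 + η Q.2.1 R.2.1 * psi A Jk η P.2.1 S.2.1
          - η Q.2.1 S.2.1 * psi A Jk η P.2.1 R.2.1 + η R.2.1 S.2.1 * psi A Jk η P.2.1 Q.2.1)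
        + (P.2.2 * Q.1 - Q.2.2 * P.1) *
            (a * psi A Jk η R.2.1 S.2.1 + psi A Jk η (A R.2.1) S.2.1 + psi A Jk η R.2.1 (A S.2.1))
        - (P.2.2 * R.1 - R.2.2 * P.1) *
            (a * psi A Jk η Q.2.1 S.2.1 + psi A Jk η (A Q.2.1) S.2.1 + psi A Jk η Q.2.1 (A S.2.1))
        + (P.2.2 * S.1 - S.2.2 * P.1) *
            (a * psi A Jk η Q.2.1 R.2.1 + psi A Jk η (A Q.2.1) R.2.1 + psi A Jk η Q.2.1 (A R.2.1))
        + (Q.2.2 * R.1 - R.2.2 * Q.1) *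
            (a * psi A Jk η P.2.1 S.2.1 + psi A Jk η (A P.2.1) S.2.1 + psi A Jk η P.2.1 (A S.2.1))
        - (Q.2.2 * S.1 - S.2.2 * Q.1) *
            (a * psi A Jk η P.2.1 R.2.1 + psi A Jk η (A P.2.1) R.2.1 + psi A Jk η P.2.1 (A R.2.1))
        + (R.2.2 * S.1 - S.2.2 * R.1) *
            (a * psi A Jk η P.2.1 Q.2.1 + psi A Jk η (A P.2.1) Q.2.1 + psi A Jk η P.2.1 (A Q.2.1)) := by
    intro P Q R S
    simp only [hσ', hbr]
    simp only [hψ_left, hψ_right, hψA]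
    ring
  -- the key quadratic identity
  have hΘeq : ∀ U V : k,
      a * psi A Jk η U V + psi A Jk η (A U) V + psi A Jk η U (A V) =
      2 * a * η U V -
        (⟪Jk ((a • A + A ∘ₗ A + (LinearMap.adjoint A) ∘ₗ A) U), V⟫
          + ⟪Jk U, (a • A + A ∘ₗ A + (LinearMap.adjoint A) ∘ₗ A) V⟫) := by
    intro U V
    simp only [psi, LinearMap.add_apply, LinearMap.smul_apply, LinearMap.comp_apply,
      map_add, map_smul, inner_add_left, inner_add_right, real_inner_smul_left,
      real_inner_smul_right, smul_eq_mul]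
    linear_combination hder U V + hadjJ (A U) V + hadj2 U V
  constructor
  · -- SKT characterization
    constructor
    · intro h
      constructor
      · intro X Y Z W
        have hh := h (0, X, 0) (0, Y, 0) (0, Z, 0) (0, W, 0)
        rw [master ((0:ℝ), X, (0:ℝ)) ((0:ℝ), Y, (0:ℝ)) ((0:ℝ), Z, (0:ℝ))
          ((0:ℝ), W, (0:ℝ))] at hh
        simp only [zero_mul, mul_zero, sub_zero, zero_sub, add_zero, zero_add,
          neg_zero] at hh
        simp only [psi] at hh
        linear_combination -hh
      · intro X Y
        have hh := h (0, (0:k), 1) (1, (0:k), 0) (0, X, 0) (0, Y, 0)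
        rw [master ((0:ℝ), (0:k), (1:ℝ)) ((1:ℝ), (0:k), (0:ℝ)) ((0:ℝ), X, (0:ℝ))
          ((0:ℝ), Y, (0:ℝ))] at hh
        simp only [map_zero, LinearMap.zero_apply, hψz1, zero_mul, mul_zero, one_mul,
          mul_one, sub_zero, zero_sub, add_zero, zero_add, neg_zero, neg_neg] at hh
        linear_combination hΘeq X Y - hh
    · rintro ⟨h1, h2⟩ P Q R S
      have hG0 : ∀ X Y Z W : k,
          η X Y * psi A Jk η Z W - η X Z * psi A Jk η Y W + η X W * psi A Jk η Y Z
            + η Y Z * psi A Jk η X W - η Y W * psi A Jk η X Z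
            + η Z W * psi A Jk η X Y = 0 := by
        intro X Y Z W
        simp only [psi]
        linear_combination h1 X Y Z W
      have hΘ0 : ∀ U V : k,
          a * psi A Jk η U V + psi A Jk η (A U) V + psi A Jk η U (A V) = 0 := by
        intro U V
        rw [hΘeq]
        have := h2 U V
        linarith
      rw [master, hG0, hΘ0, hΘ0, hΘ0, hΘ0, hΘ0, hΘ0]
      ring
  · -- Kähler characterization
    constructor
    · intro h X Y
      have hh := hdω' (0, (0:k), 1) (0, X, 0) (0, Y, 0)
      rw [h] at hh
      dsimp only at hh
      simp only [psi] at hh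
      linear_combination -hh
    · intro h
      have hψ0 : ∀ U V : k, psi A Jk η U V = 0 := by
        intro U V
        simp only [psi]
        rw [h U V]
        ring
      intro P Q R
      rw [hdω', hψ0, hψ0, hψ0]
      ring
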